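/- Let N = 2n+1, θ = 2π/N, and for 0 ≤ k ≤ n-2 define δ³λ_k = 2 ∑_{j=1}^n sin(j(2k+3)θ/2). Then δ³λ_k = 2 sin((2k+3)(n+1)θ/4) sin((2k+3)nθ/4) / sin((2k+3)θ/4), and δ³λ_k ≥ 0 for all 0 ≤ k ≤ n-2. -/

import Mathlib

open Finset

/-- For `N = 2n+1`, `θ = 2π/N` and `δ³λ_k = 2 ∑_{j=1}^n sin(j(2k+3)θ/2)`, one has the
closed form `δ³λ_k = 2 sin((2k+3)(n+1)θ/4) sin((2k+3)nθ/4) / sin((2k+3)θ/4)` and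
`δ³λ_k ≥ 0` for all `0 ≤ k ≤ n-2`. -/
theorem ngon_third_difference (n : ℕ) (hn : 3 ≤ n) :
    ∀ k : ℕ, k ≤ n - 2 →
      (2 * ∑ j ∈ Finset.Icc 1 n,
          Real.sin (j * (2 * k + 3) * (2 * Real.pi / (2 * n + 1)) / 2))
        = 2 * (Real.sin ((2 * k + 3) * (n + 1) * (2 * Real.pi / (2 * n + 1)) / 4) *
            Real.sin ((2 * k + 3) * n * (2 * Real.pi / (2 * n + 1)) / 4)) /
            Real.sin ((2 * k + 3) * (2 * Real.pi / (2 * n + 1)) / 4) ∧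
      0 ≤ 2 * ∑ j ∈ Finset.Icc 1 n,
          Real.sin (j * (2 * k + 3) * (2 * Real.pi / (2 * n + 1)) / 2) := by
  intro k hk
  have hπ := Real.pi_pos
  have hN : (0:ℝ) < 2*(n:ℝ)+1 := by positivity
  set t : ℝ := (2*(k:ℝ)+3) * Real.pi / (2*(2*(n:ℝ)+1)) with ht
  have hk2 : (k:ℝ) ≤ (n:ℝ) - 2 := by
    have h1 : k + 2 ≤ n := by omega
    have h2 : ((k:ℝ) + 2) ≤ (n:ℝ) := by exact_mod_cast h1
    linarith
  have ht0 : 0 < t := by positivity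
  have htlt : t < Real.pi/2 := by
    rw [ht, div_lt_iff₀ (by positivity)]
    nlinarith
  have hsin : 0 < Real.sin t :=
    Real.sin_pos_of_pos_of_lt_pi ht0 (htlt.trans (by linarith))
  have hcos : 0 ≤ Real.cos t := Real.cos_nonneg_of_mem_Icc ⟨by linarith, le_of_lt htlt⟩
  have hcosN : Real.cos ((2*(n:ℝ)+1) * t) = 0 := by
    rw [Real.cos_eq_zero_iff]
    refine ⟨(k:ℤ)+1, ?_⟩
    rw [ht]; push_cast; field_simp; ring
  have hterm : ∀ j : ℕ, (j:ℝ)*(2*(k:ℝ)+3)*(2*Real.pi/(2*(n:ℝ)+1))/2 = 2*(j:ℝ)*t := by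
    intro j; rw [ht]; field_simp
  have hS : Real.sin t * ∑ j ∈ Icc 1 n,
      Real.sin ((j:ℝ)*(2*(k:ℝ)+3)*(2*Real.pi/(2*(n:ℝ)+1))/2)
      = Real.cos t / 2 := by
    rw [Finset.mul_sum]
    have hstep : ∀ j ∈ Icc 1 n,
        Real.sin t * Real.sin ((j:ℝ)*(2*(k:ℝ)+3)*(2*Real.pi/(2*(n:ℝ)+1))/2)
        = Real.cos ((2*(j:ℝ)-1)*t) / 2 - Real.cos ((2*(j:ℝ)+1)*t) / 2 := by
      intro j _
      rw [hterm j]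
      have h := Real.cos_sub_cos ((2*(j:ℝ)-1)*t) ((2*(j:ℝ)+1)*t)
      rw [show ((2*(j:ℝ)-1)*t + (2*(j:ℝ)+1)*t)/2 = 2*(j:ℝ)*t by ring,
          show ((2*(j:ℝ)-1)*t - (2*(j:ℝ)+1)*t)/2 = -t by ring, Real.sin_neg] at h
      linarith
    rw [Finset.sum_congr rfl hstep]
    have : Finset.Icc 1 n = Finset.Ico 1 (n+1) := by
      rw [Finset.Ico_add_one_right_eq_Icc]
    rw [this, Finset.sum_Ico_eq_sum_range]
    have hgen : ∀ i ∈ Finset.range (n+1-1),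
        Real.cos ((2*((1+i : ℕ):ℝ)-1)*t) / 2 - Real.cos ((2*((1+i:ℕ):ℝ)+1)*t) / 2
        = (fun m : ℕ => Real.cos ((2*(m:ℝ)+1)*t)/2) i
          - (fun m : ℕ => Real.cos ((2*(m:ℝ)+1)*t)/2) (i+1) := by
      intro i _
      push_cast
      ring_nf
    rw [Finset.sum_congr rfl hgen, Finset.sum_range_sub']
    simp only [Nat.add_sub_cancel, Nat.cast_zero]
    rw [show (2*(0:ℝ)+1)*t = t by ring, show (2*((n:ℕ):ℝ)+1)*t = (2*(n:ℝ)+1)*t by push_cast; ring,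
        hcosN]
    ring
  have hprod : Real.sin (((n:ℝ)+1)*t) * Real.sin ((n:ℝ)*t) = Real.cos t / 2 := by
    have h := Real.cos_sub_cos t ((2*(n:ℝ)+1)*t)
    rw [hcosN, show (t + (2*(n:ℝ)+1)*t)/2 = ((n:ℝ)+1)*t by ring,
        show (t - (2*(n:ℝ)+1)*t)/2 = -((n:ℝ)*t) by ring, Real.sin_neg] at h
    linarith
  have hang1 : (2*(k:ℝ)+3)*((n:ℝ)+1)*(2*Real.pi/(2*(n:ℝ)+1))/4 = ((n:ℝ)+1)*t := by
    rw [ht]; field_simp; ring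
  have hang2 : (2*(k:ℝ)+3)*(n:ℝ)*(2*Real.pi/(2*(n:ℝ)+1))/4 = (n:ℝ)*t := by
    rw [ht]; field_simp; ring
  have hang3 : (2*(k:ℝ)+3)*(2*Real.pi/(2*(n:ℝ)+1))/4 = t := by
    rw [ht]; field_simp; ring
  have hSval : ∑ j ∈ Icc 1 n, Real.sin ((j:ℝ)*(2*(k:ℝ)+3)*(2*Real.pi/(2*(n:ℝ)+1))/2)
      = Real.cos t / (2 * Real.sin t) := by
    rw [eq_div_iff (by positivity)]
    linear_combination 2 * hS
  constructor
  · rw [hang1, hang2, hang3, hprod, hSval]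
    field_simp
  · rw [hSval]
    positivity
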